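/- In the generalized reversed-walk setup below, let M ⊊ {1,…,n} be a nonempty set of marked vertices and assume the spectral radius of P_{−M} is strictly less than 1. Then I − 𝒟_{−M} D̂_r^{1/2} is an invertible M-matrix: its inverse (I − 𝒟_{−M} D̂_r^{1/2})^{−1} has all entries nonnegative. Consequently the classical hitting time H_{σ,M} = √σ_{−M}ᵀ (I − 𝒟_{−M} D̂_r^{1/2})^{−1} √σ_{−M} is nonnegative. -/

import Mathlib

open Matrix

section Aux

attribute [local instance] Matrix.linftyOpNormedAddCommGroup Matrix.linftyOpNormedRing
  Matrix.linftyOpNormedSpace Matrix.linftyOpIsBoundedSMul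

variable {m : Type*} [Fintype m] [DecidableEq m]

private lemma entry_le_norm (C : Matrix m m ℝ) (i j : m) : |C i j| ≤ ‖C‖ := by
  have h : ‖C i j‖₊ ≤ ‖C‖₊ := by
    rw [Matrix.linfty_opNNNorm_def]
    calc ‖C i j‖₊ ≤ ∑ k, ‖C i k‖₊ :=
          Finset.single_le_sum (f := fun k => ‖C i k‖₊) (fun k _ => zero_le)
            (Finset.mem_univ j)
      _ ≤ _ := Finset.le_sup (f := fun i => ∑ k, ‖C i k‖₊) (Finset.mem_univ i)
  calc |C i j| = ‖C i j‖ := (Real.norm_eq_abs _).symm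
    _ ≤ ‖C‖ := h

private lemma mul_entry_nonneg {A B : Matrix m m ℝ} (hA : ∀ i j, 0 ≤ A i j)
    (hB : ∀ i j, 0 ≤ B i j) : ∀ i j, 0 ≤ (A * B) i j := by
  intro i j
  rw [Matrix.mul_apply]
  exact Finset.sum_nonneg fun k _ => mul_nonneg (hA i k) (hB k j)

private lemma pow_entry_nonneg {A : Matrix m m ℝ} (hA : ∀ i j, 0 ≤ A i j) :
    ∀ (k : ℕ) (i j : m), 0 ≤ (A ^ k) i j := by
  intro k
  induction k with
  | zero => intro i j; simp [Matrix.one_apply]; positivity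
  | succ k ih =>
      rw [pow_succ]
      exact mul_entry_nonneg ih hA

/-- Key M-matrix lemma: if `A` is entrywise nonnegative with `‖A‖ ≤ 1` (L∞ operator norm) and
`1 - A` is invertible, then `(1 - A)⁻¹` is entrywise nonnegative. -/
private lemma inv_one_sub_nonneg (A : Matrix m m ℝ) (hA0 : ∀ i j, 0 ≤ A i j)
    (hAn : ‖A‖ ≤ 1) (hU : IsUnit (1 - A)) : ∀ i j, 0 ≤ (1 - A)⁻¹ i j := by
  haveI : CompleteSpace (Matrix m m ℝ) := FiniteDimensional.complete ℝ _
  intro i j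
  -- the entry of `Ring.inverse (1 - t • A)` for `0 ≤ t < 1`
  have key : ∀ t : ℝ, t ∈ Set.Ico (0 : ℝ) 1 → 0 ≤ (Ring.inverse (1 - t • A)) i j := by
    rintro t ⟨ht0, ht1⟩
    set x := t • A with hx
    have hxn : ‖x‖ < 1 := by
      calc ‖x‖ = |t| * ‖A‖ := by rw [hx, norm_smul, Real.norm_eq_abs]
        _ ≤ |t| * 1 := by
            have := abs_nonneg t
            exact mul_le_mul_of_nonneg_left hAn this
        _ = t := by rw [mul_one, abs_of_nonneg ht0]
        _ < 1 := ht1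
    have hx0 : ∀ i j, 0 ≤ x i j := fun i j => by
      simp only [hx, Matrix.smul_apply, smul_eq_mul]
      exact mul_nonneg ht0 (hA0 i j)
    set B := Ring.inverse (1 - x) with hB
    -- partial sum decomposition
    have hdecomp : ∀ N : ℕ, B i j = (∑ k ∈ Finset.range N, x ^ k) i j + (x ^ N * B) i j := by
      intro N
      conv_lhs => rw [hB, NormedRing.inverse_one_sub_nth_order' N hxn]
      rfl
    have hlb : ∀ N : ℕ, 1 ≤ N → -(‖x‖ ^ N * ‖B‖) ≤ B i j := by
      intro N hN
      have h1 : 0 ≤ (∑ k ∈ Finset.range N, x ^ k) i j := by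
        have : (∑ k ∈ Finset.range N, x ^ k) i j
            = ∑ k ∈ Finset.range N, (x ^ k) i j := by
          simp [Matrix.sum_apply]
        rw [this]
        exact Finset.sum_nonneg fun k _ => pow_entry_nonneg hx0 k i j
      have h2 : |(x ^ N * B) i j| ≤ ‖x‖ ^ N * ‖B‖ := by
        calc |(x ^ N * B) i j| ≤ ‖x ^ N * B‖ := entry_le_norm _ i j
          _ ≤ ‖x ^ N‖ * ‖B‖ := norm_mul_le _ _
          _ ≤ ‖x‖ ^ N * ‖B‖ :=
              mul_le_mul_of_nonneg_right (norm_pow_le' _ hN) (norm_nonneg _)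
      have := neg_abs_le ((x ^ N * B) i j)
      rw [hdecomp N]
      nlinarith [h1, h2, this]
    -- take `N → ∞`
    have htend : Filter.Tendsto (fun N : ℕ => -(‖x‖ ^ N * ‖B‖)) Filter.atTop (nhds 0) := by
      have h0 : Filter.Tendsto (fun N : ℕ => ‖x‖ ^ N) Filter.atTop (nhds 0) :=
        tendsto_pow_atTop_nhds_zero_of_lt_one (norm_nonneg _) hxn
      have := (h0.mul_const ‖B‖).neg
      simpa using this
    exact le_of_tendsto htend (Filter.eventually_atTop.2 ⟨1, fun N hN => hlb N hN⟩)
  -- continuity as `t → 1⁻`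
  have hcont : ContinuousAt (fun t : ℝ => (Ring.inverse (1 - t • A)) i j) 1 := by
    have h1 : Continuous (fun t : ℝ => (1 : Matrix m m ℝ) - t • A) :=
      continuous_const.sub (continuous_id.smul continuous_const)
    have h2 : ContinuousAt Ring.inverse ((1 : Matrix m m ℝ) - A) := by
      have := NormedRing.inverse_continuousAt hU.unit
      rwa [hU.unit_spec] at this
    have h3 : Continuous (fun C : Matrix m m ℝ => C i j) := by
      let L : Matrix m m ℝ →ₗ[ℝ] ℝ :=
        { toFun := fun C => C i j, map_add' := fun _ _ => rfl, map_smul' := fun _ _ => rfl }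
      exact L.continuous_of_finiteDimensional
    have h12 : ContinuousAt (Ring.inverse ∘ (fun t : ℝ => (1 : Matrix m m ℝ) - t • A)) 1 :=
      ContinuousAt.comp (by simpa using h2) h1.continuousAt
    have h123 : ContinuousAt ((fun C : Matrix m m ℝ => C i j) ∘
        (Ring.inverse ∘ (fun t : ℝ => (1 : Matrix m m ℝ) - t • A))) 1 :=
      ContinuousAt.comp h3.continuousAt h12
    exact h123
  have hne : (nhdsWithin (1 : ℝ) (Set.Ico (0 : ℝ) 1)).NeBot := by
    rw [← mem_closure_iff_nhdsWithin_neBot, closure_Ico (by norm_num : (0:ℝ) ≠ 1)]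
    exact ⟨by norm_num, le_refl 1⟩
  have hlim : Filter.Tendsto (fun t : ℝ => (Ring.inverse (1 - t • A)) i j)
      (nhdsWithin 1 (Set.Ico (0 : ℝ) 1)) (nhds ((Ring.inverse (1 - (1:ℝ) • A)) i j)) :=
    (hcont.tendsto).mono_left nhdsWithin_le_nhds
  have hfin : 0 ≤ (Ring.inverse (1 - (1:ℝ) • A)) i j :=
    ge_of_tendsto hlim (eventually_nhdsWithin_of_forall key)
  rwa [one_smul, ← Matrix.nonsing_inv_eq_ringInverse] at hfin

/-- Substochastic bound on the L∞ operator norm. -/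
private lemma norm_le_one_of_substochastic (A : Matrix m m ℝ) (hA0 : ∀ i j, 0 ≤ A i j)
    (hA1 : ∀ i, ∑ j, A i j ≤ 1) : ‖A‖ ≤ 1 := by
  have h : ‖A‖₊ ≤ 1 := by
    rw [Matrix.linfty_opNNNorm_def]
    apply Finset.sup_le
    intro i _
    rw [← NNReal.coe_le_coe, NNReal.coe_sum, NNReal.coe_one]
    calc ∑ j, (‖A i j‖₊ : ℝ) = ∑ j, A i j := by
          refine Finset.sum_congr rfl fun j _ => ?_
          simp [Real.nnnorm_of_nonneg (hA0 i j)]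
      _ ≤ 1 := hA1 i
  exact_mod_cast h

end Aux

/-- In the generalized reversed-walk setup, with nonempty marked set
M ⊊ {1,…,n} and spectral radius of P_{−M} strictly less than 1, the matrix
I − 𝒟_{−M} D̂_r^{1/2} is an invertible M-matrix: its inverse is entrywise
nonnegative; consequently H_{σ,M} = √σ_{−M}ᵀ (I − 𝒟_{−M} D̂_r^{1/2})⁻¹ √σ_{−M} ≥ 0. -/
theorem stmt15 (n : ℕ) (hn : 0 < n)
    (P : Matrix (Fin n) (Fin n) ℝ)
    (hP0 : ∀ i j, 0 ≤ P i j) (hP1 : ∀ i, ∑ j, P i j = 1)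
    (σ : Fin n → ℝ) (hσ0 : ∀ i, 0 < σ i) (hσ1 : ∑ i, σ i = 1)
    (hPcol : ∀ j, ∃ i, P i j ≠ 0)
    (r : Fin n → ℝ) (hr : ∀ y, r y = ∑ x, σ x * P x y / σ y)
    (Pstar : Matrix (Fin n) (Fin n) ℝ)
    (hPstar : ∀ y x, Pstar y x = (σ x * P x y / σ y) / r y)
    (𝒟 : Matrix (Fin n) (Fin n) ℝ)
    (h𝒟 : ∀ x y, 𝒟 x y = Real.sqrt (P x y * Pstar y x))
    (M : Finset (Fin n)) (hM : M.Nonempty) (hM' : M ≠ Finset.univ)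
    (Pm : Matrix {i : Fin n // i ∉ M} {i : Fin n // i ∉ M} ℝ)
    (hPm : Pm = P.submatrix Subtype.val Subtype.val)
    (hspec : ∀ μ ∈ spectrum ℂ (Pm.map (Complex.ofReal)), ‖μ‖ < 1)
    (Dm : Matrix {i : Fin n // i ∉ M} {i : Fin n // i ∉ M} ℝ)
    (hDm : Dm = 𝒟.submatrix Subtype.val Subtype.val)
    (Drhalf : Matrix {i : Fin n // i ∉ M} {i : Fin n // i ∉ M} ℝ)
    (hDrhalf : Drhalf = Matrix.diagonal (fun i => Real.sqrt (r i.1))) :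
    IsUnit (1 - Dm * Drhalf) ∧
    (∀ i j, 0 ≤ (1 - Dm * Drhalf)⁻¹ i j) ∧
    0 ≤ (fun i => Real.sqrt (σ i.1)) ⬝ᵥ
        ((1 - Dm * Drhalf)⁻¹ *ᵥ fun i => Real.sqrt (σ i.1)) := by
  -- positivity of r
  have hrpos : ∀ y, 0 < r y := by
    intro y
    rw [hr y]
    obtain ⟨x0, hx0⟩ := hPcol y
    refine Finset.sum_pos'
      (fun x _ => div_nonneg (mul_nonneg (hσ0 x).le (hP0 x y)) (hσ0 y).le)
      ⟨x0, Finset.mem_univ _, ?_⟩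
    have hpos : 0 < P x0 y := lt_of_le_of_ne (hP0 x0 y) (Ne.symm hx0)
    exact div_pos (mul_pos (hσ0 x0) hpos) (hσ0 y)
  -- the diagonal conjugation
  set e : {i : Fin n // i ∉ M} → ℝ := fun i => Real.sqrt (σ i.1) with he
  set f : {i : Fin n // i ∉ M} → ℝ := fun i => (Real.sqrt (σ i.1))⁻¹ with hf
  have hepos : ∀ i, 0 < e i := fun i => Real.sqrt_pos.2 (hσ0 i.1)
  have hfpos : ∀ i, 0 < f i := fun i => inv_pos.2 (Real.sqrt_pos.2 (hσ0 i.1))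
  have hef : ∀ i, e i * f i = 1 := fun i => mul_inv_cancel₀ (hepos i).ne'
  have hfe : ∀ i, f i * e i = 1 := fun i => inv_mul_cancel₀ (hepos i).ne'
  -- key entry identity: (Dm * Drhalf) i j = e i * Pm i j * f j
  have hkey : Dm * Drhalf = Matrix.diagonal e * Pm * Matrix.diagonal f := by
    ext i j
    rw [hDrhalf, Matrix.mul_diagonal, Matrix.mul_diagonal, Matrix.diagonal_mul]
    set x := i.1
    set y := j.1
    have hxy : Dm i j = Real.sqrt (P x y * Pstar y x) := by
      rw [hDm]; exact h𝒟 x y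
    have hPs : Pstar y x * r y = σ x * P x y / σ y := by
      rw [hPstar, div_mul_cancel₀ _ (hrpos y).ne']
    have hsq : P x y * (σ x * P x y / σ y) = (e i * P x y * f j) ^ 2 := by
      have hsx : Real.sqrt (σ x) ^ 2 = σ x := Real.sq_sqrt (hσ0 x).le
      have hsy : Real.sqrt (σ y) ^ 2 = σ y := Real.sq_sqrt (hσ0 y).le
      have hy0 : Real.sqrt (σ y) ≠ 0 := (Real.sqrt_pos.2 (hσ0 y)).ne'
      rw [he, hf]
      simp only
      rw [mul_pow, mul_pow, inv_pow, hsx, hsy]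
      field_simp
    have hPs0 : 0 ≤ Pstar y x := by
      rw [hPstar]
      exact div_nonneg (div_nonneg (mul_nonneg (hσ0 x).le (hP0 x y)) (hσ0 y).le) (hrpos y).le
    calc Dm i j * Real.sqrt (r y)
        = Real.sqrt (P x y * Pstar y x * r y) := by
          rw [hxy, ← Real.sqrt_mul (mul_nonneg (hP0 x y) hPs0)]
      _ = Real.sqrt (P x y * (σ x * P x y / σ y)) := by rw [mul_assoc, hPs]
      _ = Real.sqrt ((e i * P x y * f j) ^ 2) := by rw [hsq]
      _ = e i * P x y * f j :=
          Real.sqrt_sq (mul_nonneg (mul_nonneg (hepos i).le (hP0 x y)) (hfpos j).le)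
      _ = e i * Pm i j * f j := by rw [hPm]; rfl
  -- 1 - Dm * Drhalf = diag e * (1 - Pm) * diag f
  have hdd : Matrix.diagonal e * Matrix.diagonal f = 1 := by
    rw [Matrix.diagonal_mul_diagonal]
    simp only [hef]
    exact Matrix.diagonal_one
  have hdd' : Matrix.diagonal f * Matrix.diagonal e = 1 := by
    rw [Matrix.diagonal_mul_diagonal]
    simp only [hfe]
    exact Matrix.diagonal_one
  have hfact : 1 - Dm * Drhalf = Matrix.diagonal e * (1 - Pm) * Matrix.diagonal f := by
    rw [hkey, Matrix.mul_sub, Matrix.sub_mul, Matrix.mul_one, hdd]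
  -- invertibility of 1 - Pm from the spectral hypothesis
  have hdet : (1 - Pm).det ≠ 0 := by
    intro h0
    have hC : ((1 - Pm).map (Complex.ofReal)).det = 0 := by
      have := (Complex.ofRealHom.map_det (1 - Pm)).symm
      rw [show Complex.ofRealHom.mapMatrix (1 - Pm) = (1 - Pm).map (Complex.ofReal) from rfl]
        at this
      rw [this, h0, map_zero]
    have hmap : (1 - Pm).map (Complex.ofReal) = 1 - Pm.map (Complex.ofReal) := by
      rw [Matrix.map_sub _ (fun a b => by push_cast; ring), Matrix.map_one _ (by simp) (by simp)]
    have hnu : ¬ IsUnit ((1 : Matrix _ _ ℂ) - Pm.map (Complex.ofReal)) := by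
      rw [Matrix.isUnit_iff_isUnit_det, ← hmap, hC]
      exact not_isUnit_zero
    have h1spec : (1 : ℂ) ∈ spectrum ℂ (Pm.map (Complex.ofReal)) := by
      rw [spectrum.mem_iff, _root_.map_one]
      exact hnu
    have := hspec 1 h1spec
    simp at this
  have hUPm : IsUnit (1 - Pm) := (Matrix.isUnit_iff_isUnit_det _).2 (isUnit_iff_ne_zero.2 hdet)
  -- substochasticity of Pm
  have hPm0 : ∀ i j, 0 ≤ Pm i j := by
    intro i j; rw [hPm]; exact hP0 i.1 j.1
  have hPm1 : ∀ i, ∑ j, Pm i j ≤ 1 := by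
    intro i
    have h1 : ∑ j : {i : Fin n // i ∉ M}, Pm i j = ∑ y ∈ Mᶜ, P i.1 y := by
      rw [hPm, Finset.sum_subtype Mᶜ (fun x => Finset.mem_compl) (fun y => P i.1 y)]
      rfl
    rw [h1]
    calc ∑ y ∈ Mᶜ, P i.1 y ≤ ∑ y, P i.1 y :=
          Finset.sum_le_sum_of_subset_of_nonneg (Finset.subset_univ _)
            (fun y _ _ => hP0 i.1 y)
      _ = 1 := hP1 i.1
  -- inverse of 1 - Pm is entrywise nonnegative
  have hinvPm : ∀ i j, 0 ≤ (1 - Pm)⁻¹ i j :=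
    inv_one_sub_nonneg Pm hPm0 (norm_le_one_of_substochastic Pm hPm0 hPm1) hUPm
  -- invertibility of 1 - Dm * Drhalf
  have hdetE : (Matrix.diagonal e).det ≠ 0 := by
    rw [Matrix.det_diagonal]
    exact Finset.prod_ne_zero_iff.2 fun i _ => (hepos i).ne'
  have hdetF : (Matrix.diagonal f).det ≠ 0 := by
    rw [Matrix.det_diagonal]
    exact Finset.prod_ne_zero_iff.2 fun i _ => (hfpos i).ne'
  have hUnit : IsUnit (1 - Dm * Drhalf) := by
    rw [hfact, Matrix.isUnit_iff_isUnit_det, Matrix.det_mul, Matrix.det_mul]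
    exact ((isUnit_iff_ne_zero.2 hdetE).mul ((Matrix.isUnit_iff_isUnit_det _).1 hUPm)).mul (isUnit_iff_ne_zero.2 hdetF)
  -- inverse formula
  have hinv_eq : (1 - Dm * Drhalf)⁻¹ = Matrix.diagonal e * (1 - Pm)⁻¹ * Matrix.diagonal f := by
    apply Matrix.inv_eq_right_inv
    rw [hfact]
    calc Matrix.diagonal e * (1 - Pm) * Matrix.diagonal f *
          (Matrix.diagonal e * (1 - Pm)⁻¹ * Matrix.diagonal f)
        = Matrix.diagonal e * (1 - Pm) * (Matrix.diagonal f * Matrix.diagonal e) *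
            (1 - Pm)⁻¹ * Matrix.diagonal f := by
          noncomm_ring
      _ = Matrix.diagonal e * ((1 - Pm) * (1 - Pm)⁻¹) * Matrix.diagonal f := by
          rw [hdd', Matrix.mul_one]; noncomm_ring
      _ = 1 := by rw [Matrix.mul_nonsing_inv _ (isUnit_iff_ne_zero.2 hdet), Matrix.mul_one, hdd]
  have hinvNonneg : ∀ i j, 0 ≤ (1 - Dm * Drhalf)⁻¹ i j := by
    intro i j
    rw [hinv_eq, Matrix.mul_diagonal, Matrix.diagonal_mul]
    exact mul_nonneg (mul_nonneg (hepos i).le (hinvPm i j)) (hfpos j).le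
  refine ⟨hUnit, hinvNonneg, ?_⟩
  rw [dotProduct]
  refine Finset.sum_nonneg fun i _ => mul_nonneg (Real.sqrt_nonneg _) ?_
  rw [Matrix.mulVec]
  refine Finset.sum_nonneg fun j _ => mul_nonneg (hinvNonneg i j) (Real.sqrt_nonneg _)
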